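/- If x is a positive root and w ∈ W has ℓ(w) = dp(x) and w⁻¹x ∈ Φ⁻ (i.e., w ∈ T(x)), then (b, x) > 0 for every b ∈ N(w⁻¹). The same holds for w ∈ S(x) (ℓ(w) = dp(x) - 1 and w⁻¹x ∈ Π). -/

import Mathlib

open Real

variable {V : Type*} [AddCommGroup V] [Module ℝ V]

/-- The set of positive linear combinations of a set `A`. -/
def PLC (A : Set V) : Set V :=
  {v | ∃ (s : Finset V) (c : V → ℝ), (↑s : Set V) ⊆ A ∧ (∀ x ∈ s, 0 ≤ c x) ∧
    (∃ x ∈ s, 0 < c x) ∧ v = ∑ x ∈ s, c x • x}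

/-- A Coxeter datum (Krammer): a root basis `Pi` in `V` with bilinear form `B`. -/
structure CoxeterDatum (V : Type*) [AddCommGroup V] [Module ℝ V] where
  B : LinearMap.BilinForm ℝ V
  Pi : Set V
  norm_one : ∀ a ∈ Pi, B a a = 1
  symm : ∀ a ∈ Pi, ∀ b ∈ Pi, B a b = B b a
  offdiag : ∀ a ∈ Pi, ∀ b ∈ Pi, a ≠ b →
    (∃ m : ℕ, 2 ≤ m ∧ B a b = -Real.cos (Real.pi / m)) ∨ B a b ≤ -1
  zero_not_plc : (0 : V) ∉ PLC Pi

namespace CoxeterDatum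

variable (D : CoxeterDatum V)

/-- The reflection in the vector `a`, as a linear endomorphism of `V`. -/
noncomputable def refl (a : V) : Module.End ℝ V where
  toFun x := x - (2 * D.B x a) • a
  map_add' x y := by simp only [map_add, LinearMap.add_apply]; module
  map_smul' c x := by simp only [map_smul, LinearMap.smul_apply, smul_eq_mul,
    RingHom.id_apply]; module

/-- The set of simple reflections, as invertible endomorphisms of `V`. -/
def simples : Set (Module.End ℝ V)ˣ :=
  {u | ∃ a ∈ D.Pi, (u : Module.End ℝ V) = D.refl a}

/-- The Coxeter group `W`, realized as the group generated by the simple reflections. -/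
noncomputable def Wgrp : Subgroup (Module.End ℝ V)ˣ := Subgroup.closure D.simples

/-- The root system. -/
def roots : Set V :=
  {x | ∃ w ∈ D.Wgrp, ∃ a ∈ D.Pi, x = (w : Module.End ℝ V) a}

/-- The positive roots. -/
def posRoots : Set V := D.roots ∩ PLC D.Pi

/-- The negative roots. -/
def negRoots : Set V := {x | -x ∈ D.posRoots}

/-- The length of an element of `W` with respect to the simple reflections. -/
noncomputable def len (w : (Module.End ℝ V)ˣ) : ℕ :=
  sInf {n | ∃ l : List (Module.End ℝ V)ˣ,
    l.length = n ∧ (∀ u ∈ l, u ∈ D.simples) ∧ l.prod = w}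

/-- The depth of a root. -/
noncomputable def dp (x : V) : ℕ :=
  sInf {n | ∃ w ∈ D.Wgrp, D.len w = n ∧ (w : Module.End ℝ V) x ∈ D.negRoots}

/-- Dominance: `x` dominates `y` if every `w ∈ W` making `x` negative makes `y` negative. -/
def dom (x y : V) : Prop :=
  ∀ w ∈ D.Wgrp, (w : Module.End ℝ V) x ∈ D.negRoots → (w : Module.End ℝ V) y ∈ D.negRoots

/-- `D(x)`: the set of positive roots other than `x` dominated by `x`. -/
def DSet (x : V) : Set V := {y | y ∈ D.posRoots ∧ y ≠ x ∧ D.dom x y}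

/-- `D_n`: the set of positive roots dominating exactly `n` other positive roots. -/
def Dn (n : ℕ) : Set V :=
  {x | x ∈ D.posRoots ∧ (D.DSet x).Finite ∧ (D.DSet x).ncard = n}

/-- The set of reflections of `W`. -/
def TSet : Set (Module.End ℝ V)ˣ :=
  {t | ∃ w ∈ D.Wgrp, ∃ s ∈ D.simples, t = w * s * w⁻¹}

/-- `N(w)`: the set of positive roots sent to negative roots by `w`. -/
def NSet (w : (Module.End ℝ V)ˣ) : Set V :=
  {z | z ∈ D.posRoots ∧ (w : Module.End ℝ V) z ∈ D.negRoots}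

/-- `N̄(w)`: the reflections `t` with `ℓ(wt) < ℓ(w)`. -/
def Nbar (w : (Module.End ℝ V)ˣ) : Set (Module.End ℝ V)ˣ :=
  {t | t ∈ D.TSet ∧ D.len (w * t) < D.len w}

/-- The canonical generators of a reflection subgroup `W'`. -/
def canGens (W' : Subgroup (Module.End ℝ V)ˣ) : Set (Module.End ℝ V)ˣ :=
  {t | t ∈ D.TSet ∧ D.Nbar t ∩ (W' : Set (Module.End ℝ V)ˣ) = {t}}

/-- `S(x)`: elements of `W` of minimal length sending `x` into `Π` (inverse-wise). -/
def SSet (x : V) : Set (Module.End ℝ V)ˣ :=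
  {w | w ∈ D.Wgrp ∧ D.len w = D.dp x - 1 ∧ ((w⁻¹ : (Module.End ℝ V)ˣ) : Module.End ℝ V) x ∈ D.Pi}

end CoxeterDatum

section PLCBasics

variable {A : Set V}

lemma mem_PLC_of_mem {a : V} (ha : a ∈ A) : a ∈ PLC A := by
  refine ⟨{a}, fun _ => 1, by simpa using ha, by simp, ⟨a, by simp⟩, by simp⟩

lemma plc_add {u v : V} (hu : u ∈ PLC A) (hv : v ∈ PLC A) : u + v ∈ PLC A := by
  classical
  obtain ⟨s, c, hs, hc, ⟨x₀, hx₀s, hx₀⟩, rfl⟩ := hu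
  obtain ⟨s', c', hs', hc', _, rfl⟩ := hv
  refine ⟨s ∪ s', fun x => (if x ∈ s then c x else 0) + (if x ∈ s' then c' x else 0),
    ?_, ?_, ⟨x₀, Finset.mem_union_left _ hx₀s, ?_⟩, ?_⟩
  · intro x hx
    rcases Finset.mem_union.1 (by exact_mod_cast hx) with h | h
    exacts [hs h, hs' h]
  · intro x hx
    have h1 : 0 ≤ (if x ∈ s then c x else 0) := by
      split
      · exact hc _ ‹_›
      · exact le_refl 0
    have h2 : 0 ≤ (if x ∈ s' then c' x else 0) := by
      split
      · exact hc' _ ‹_›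
      · exact le_refl 0
    exact add_nonneg h1 h2
  · have h2 : 0 ≤ (if x₀ ∈ s' then c' x₀ else 0) := by
      split
      · exact hc' _ ‹_›
      · exact le_refl 0
    simp only [if_pos hx₀s]
    linarith
  · symm
    have e1 : ∀ x ∈ s ∪ s', ((if x ∈ s then c x else 0) + if x ∈ s' then c' x else 0) • x
        = (if x ∈ s then c x • x else 0) + (if x ∈ s' then c' x • x else 0) := by
      intro x _
      rw [add_smul]
      congr 1 <;> split <;> simp
    rw [Finset.sum_congr rfl e1, Finset.sum_add_distrib, Finset.sum_ite_mem,
      Finset.sum_ite_mem, Finset.union_inter_cancel_left, Finset.union_inter_cancel_right]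

lemma plc_smul {u : V} {t : ℝ} (ht : 0 < t) (hu : u ∈ PLC A) : t • u ∈ PLC A := by
  obtain ⟨s, c, hs, hc, ⟨x₀, hx₀s, hx₀⟩, rfl⟩ := hu
  refine ⟨s, fun x => t * c x, hs, fun x hx => mul_nonneg ht.le (hc x hx),
    ⟨x₀, hx₀s, mul_pos ht hx₀⟩, ?_⟩
  rw [Finset.smul_sum]
  exact Finset.sum_congr rfl fun x _ => by rw [smul_smul]

lemma plc_add_smul_nonneg {u v : V} {t : ℝ} (hu : u ∈ PLC A) (ht : 0 ≤ t)
    (hv : v ∈ PLC A) : u + t • v ∈ PLC A := by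
  rcases eq_or_lt_of_le ht with rfl | ht
  · simpa using hu
  · exact plc_add hu (plc_smul ht hv)

lemma plc_combo {p q : V} {lam mu : ℝ} (hp : p ∈ PLC A) (hq : q ∈ PLC A)
    (hlam : 0 ≤ lam) (hmu : 0 ≤ mu) (hne : ¬(lam = 0 ∧ mu = 0)) :
    lam • p + mu • q ∈ PLC A := by
  rcases eq_or_lt_of_le hlam with rfl | hlam
  · rcases eq_or_lt_of_le hmu with rfl | hmu
    · exact absurd ⟨rfl, rfl⟩ hne
    · simpa using plc_smul hmu hq
  · simpa [add_comm] using plc_add_smul_nonneg (plc_smul hlam hp) hmu hq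

end PLCBasics

namespace CoxeterDatum

variable (D : CoxeterDatum V)

lemma plc_neg_not_plc {u : V} (hu : u ∈ PLC D.Pi) : -u ∉ PLC D.Pi := fun h =>
  D.zero_not_plc (by simpa using plc_add hu h)

lemma plc_ne_zero {u : V} (hu : u ∈ PLC D.Pi) : u ≠ 0 := fun h =>
  D.zero_not_plc (h ▸ hu)

end CoxeterDatum
namespace CoxeterDatum

variable (D : CoxeterDatum V)

/-- The span of the simple roots. -/
noncomputable def U : Submodule ℝ V := Submodule.span ℝ D.Pi

variable {D}

lemma mem_U_of_mem_Pi {a : V} (ha : a ∈ D.Pi) : a ∈ D.U := Submodule.subset_span ha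

lemma B_symm_on_U : ∀ x ∈ D.U, ∀ y ∈ D.U, D.B x y = D.B y x := by
  have h1 : ∀ b ∈ D.Pi, ∀ x ∈ D.U, D.B x b = D.B b x := by
    intro b hb x hx
    induction hx using Submodule.span_induction with
    | mem z hz => exact D.symm z hz b hb
    | zero => simp
    | add u v hu hv ihu ihv => simp only [map_add, LinearMap.add_apply, ihu, ihv]
    | smul t u hu ihu => simp only [map_smul, LinearMap.smul_apply, smul_eq_mul, ihu]
  intro x hx y hy
  induction hy using Submodule.span_induction with
  | mem z hz => exact h1 z hz x hx
  | zero => simp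
  | add u v hu hv ihu ihv => simp only [map_add, LinearMap.add_apply, ihu, ihv]
  | smul t u hu ihu => simp only [map_smul, LinearMap.smul_apply, smul_eq_mul, ihu]

lemma refl_apply (a x : V) : D.refl a x = x - (2 * D.B x a) • a := rfl

lemma refl_mem_U {a x : V} (ha : a ∈ D.Pi) (hx : x ∈ D.U) : D.refl a x ∈ D.U :=
  sub_mem hx (Submodule.smul_mem _ _ (mem_U_of_mem_Pi ha))

lemma B_refl_invariant {a : V} (ha : a ∈ D.Pi) {y : V} (hy : y ∈ D.U) (x : V) :
    D.B (D.refl a x) (D.refl a y) = D.B x y := by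
  have haU : a ∈ D.U := mem_U_of_mem_Pi ha
  have hay : D.B a y = D.B y a := B_symm_on_U a haU y hy
  have haa : D.B a a = 1 := D.norm_one a ha
  simp only [refl_apply, map_sub, map_smul, LinearMap.sub_apply, LinearMap.smul_apply,
    smul_eq_mul]
  rw [haa]
  linear_combination (-2 * D.B x a) * hay

lemma refl_refl (b : V) (hb : D.B b b = 1) (x : V) : D.refl b (D.refl b x) = x := by
  simp only [refl_apply, map_sub, map_smul, LinearMap.sub_apply, LinearMap.smul_apply,
    smul_eq_mul, hb]
  module

variable (D)

/-- The reflection in a unit-norm vector, as a unit of the endomorphism ring. -/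
noncomputable def ru (b : V) (hb : D.B b b = 1) : (Module.End ℝ V)ˣ where
  val := D.refl b
  inv := D.refl b
  val_inv := by ext x; exact refl_refl b hb x
  inv_val := by ext x; exact refl_refl b hb x

variable {D}

lemma ru_val (b : V) (hb : D.B b b = 1) : ((D.ru b hb : (Module.End ℝ V)ˣ) : Module.End ℝ V) = D.refl b := rfl

lemma ru_mul_self (b : V) (hb : D.B b b = 1) : D.ru b hb * D.ru b hb = 1 :=
  Units.ext (by show D.refl b * D.refl b = 1; ext x; exact refl_refl b hb x)

lemma ru_inv (b : V) (hb : D.B b b = 1) : (D.ru b hb)⁻¹ = D.ru b hb :=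
  inv_eq_of_mul_eq_one_right (ru_mul_self b hb)

/-- The simple reflection attached to `a ∈ Π`. -/
noncomputable def sru (a : V) (ha : a ∈ D.Pi) : (Module.End ℝ V)ˣ := D.ru a (D.norm_one a ha)

lemma sru_mem_simples {a : V} (ha : a ∈ D.Pi) : D.sru a ha ∈ D.simples := ⟨a, ha, rfl⟩

lemma simples_subset_Wgrp : D.simples ⊆ (D.Wgrp : Set (Module.End ℝ V)ˣ) :=
  Subgroup.subset_closure

lemma sru_mem_Wgrp {a : V} (ha : a ∈ D.Pi) : D.sru a ha ∈ D.Wgrp :=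
  simples_subset_Wgrp (sru_mem_simples ha)

lemma simples_val {u : (Module.End ℝ V)ˣ} (hu : u ∈ D.simples) :
    ∃ a, ∃ ha : a ∈ D.Pi, u = D.sru a ha := by
  obtain ⟨a, ha, hval⟩ := hu
  exact ⟨a, ha, Units.ext hval⟩

lemma simples_inv {u : (Module.End ℝ V)ˣ} (hu : u ∈ D.simples) : u⁻¹ = u := by
  obtain ⟨a, ha, rfl⟩ := simples_val hu
  exact ru_inv _ _

lemma unit_apply_mul (w v : (Module.End ℝ V)ˣ) (x : V) :
    ((w * v : (Module.End ℝ V)ˣ) : Module.End ℝ V) x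
      = (w : Module.End ℝ V) ((v : Module.End ℝ V) x) := by
  rw [Units.val_mul]; rfl

lemma unit_apply_inv_apply (w : (Module.End ℝ V)ˣ) (x : V) :
    (w : Module.End ℝ V) (((w⁻¹ : (Module.End ℝ V)ˣ) : Module.End ℝ V) x) = x := by
  rw [← unit_apply_mul, mul_inv_cancel, Units.val_one, Module.End.one_apply]

lemma unit_inv_apply_apply (w : (Module.End ℝ V)ˣ) (x : V) :
    ((w⁻¹ : (Module.End ℝ V)ˣ) : Module.End ℝ V) ((w : Module.End ℝ V) x) = x := by
  rw [← unit_apply_mul, inv_mul_cancel, Units.val_one, Module.End.one_apply]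

lemma Wgrp_invariance : ∀ w ∈ D.Wgrp,
    (∀ y ∈ D.U, ((w : Module.End ℝ V) y ∈ D.U ∧
      ∀ x, D.B ((w : Module.End ℝ V) x) ((w : Module.End ℝ V) y) = D.B x y)) ∧
    (∀ y ∈ D.U, (((w⁻¹ : (Module.End ℝ V)ˣ) : Module.End ℝ V) y ∈ D.U ∧
      ∀ x, D.B (((w⁻¹ : (Module.End ℝ V)ˣ) : Module.End ℝ V) x)
        (((w⁻¹ : (Module.End ℝ V)ˣ) : Module.End ℝ V) y) = D.B x y)) := by
  intro w hw
  induction hw using Subgroup.closure_induction with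
  | mem u hu =>
    obtain ⟨a, ha, rfl⟩ := simples_val hu
    have h : ∀ y ∈ D.U, ((D.sru a ha : Module.End ℝ V) y ∈ D.U ∧
        ∀ x, D.B ((D.sru a ha : Module.End ℝ V) x) ((D.sru a ha : Module.End ℝ V) y) = D.B x y) := by
      intro y hy
      exact ⟨refl_mem_U ha hy, fun x => B_refl_invariant ha hy x⟩
    exact ⟨h, by rw [simples_inv (sru_mem_simples ha)]; exact h⟩
  | one => simp
  | mul w v hw hv ihw ihv =>
    constructor
    · intro y hy
      rw [unit_apply_mul]
      obtain ⟨hvy, hvB⟩ := ihv.1 y hy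
      obtain ⟨hwy, hwB⟩ := ihw.1 _ hvy
      refine ⟨hwy, fun x => ?_⟩
      rw [unit_apply_mul, hwB, hvB]
    · intro y hy
      rw [mul_inv_rev, unit_apply_mul]
      obtain ⟨hwy, hwB⟩ := ihw.2 y hy
      obtain ⟨hvy, hvB⟩ := ihv.2 _ hwy
      refine ⟨hvy, fun x => ?_⟩
      rw [unit_apply_mul, hvB, hwB]
  | inv w hw ihw => exact ⟨ihw.2, by rw [inv_inv]; exact ihw.1⟩

lemma Wgrp_maps_U {w : (Module.End ℝ V)ˣ} (hw : w ∈ D.Wgrp) {y : V} (hy : y ∈ D.U) :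
    (w : Module.End ℝ V) y ∈ D.U := ((Wgrp_invariance w hw).1 y hy).1

lemma Wgrp_B_inv {w : (Module.End ℝ V)ˣ} (hw : w ∈ D.Wgrp) {y : V} (hy : y ∈ D.U) (x : V) :
    D.B ((w : Module.End ℝ V) x) ((w : Module.End ℝ V) y) = D.B x y :=
  ((Wgrp_invariance w hw).1 y hy).2 x

lemma mem_roots_of_mem_Pi {a : V} (ha : a ∈ D.Pi) : a ∈ D.roots :=
  ⟨1, one_mem _, a, ha, by rw [Units.val_one, Module.End.one_apply]⟩

lemma roots_subset_U {x : V} (hx : x ∈ D.roots) : x ∈ D.U := by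
  obtain ⟨w, hw, a, ha, rfl⟩ := hx
  exact Wgrp_maps_U hw (mem_U_of_mem_Pi ha)

lemma root_norm {x : V} (hx : x ∈ D.roots) : D.B x x = 1 := by
  obtain ⟨w, hw, a, ha, rfl⟩ := hx
  rw [Wgrp_B_inv hw (mem_U_of_mem_Pi ha)]
  exact D.norm_one a ha

lemma roots_smul_mem {w : (Module.End ℝ V)ˣ} (hw : w ∈ D.Wgrp) {x : V} (hx : x ∈ D.roots) :
    (w : Module.End ℝ V) x ∈ D.roots := by
  obtain ⟨v, hv, a, ha, rfl⟩ := hx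
  exact ⟨w * v, mul_mem hw hv, a, ha, (unit_apply_mul w v a).symm⟩

lemma refl_self (a : V) (ha : D.B a a = 1) : D.refl a a = -a := by
  rw [refl_apply, ha]; module

lemma roots_neg {x : V} (hx : x ∈ D.roots) : -x ∈ D.roots := by
  obtain ⟨w, hw, a, ha, rfl⟩ := hx
  refine ⟨w * D.sru a ha, mul_mem hw (sru_mem_Wgrp ha), a, ha, ?_⟩
  rw [unit_apply_mul]
  show -(w : Module.End ℝ V) a = (w : Module.End ℝ V) (D.refl a a)
  rw [refl_self a (D.norm_one a ha), map_neg]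

lemma conj_refl {w : (Module.End ℝ V)ˣ} (hw : w ∈ D.Wgrp) {b : V} (hb : b ∈ D.U) :
    (w : Module.End ℝ V) * D.refl b * ((w⁻¹ : (Module.End ℝ V)ˣ) : Module.End ℝ V)
      = D.refl ((w : Module.End ℝ V) b) := by
  ext x
  rw [Module.End.mul_apply, Module.End.mul_apply, refl_apply, refl_apply, map_sub, map_smul,
    unit_apply_inv_apply]
  congr 2
  conv_rhs => rw [← unit_apply_inv_apply w x]
  rw [Wgrp_B_inv hw hb]

lemma conj_ru {w : (Module.End ℝ V)ˣ} (hw : w ∈ D.Wgrp) {b : V} (hb : b ∈ D.U)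
    (hnb : D.B b b = 1) (hnwb : D.B ((w : Module.End ℝ V) b) ((w : Module.End ℝ V) b) = 1) :
    w * D.ru b hnb * w⁻¹ = D.ru ((w : Module.End ℝ V) b) hnwb :=
  Units.ext (by rw [Units.val_mul, Units.val_mul, ru_val, ru_val]; exact conj_refl hw hb)

lemma ru_mem_Wgrp {b : V} (hb : b ∈ D.roots) : D.ru b (root_norm hb) ∈ D.Wgrp := by
  have hb2 := hb
  obtain ⟨w, hw, a, ha, hb'⟩ := hb2
  have hnorm : D.B ((w : Module.End ℝ V) a) ((w : Module.End ℝ V) a) = 1 := by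
    rw [← hb']; exact root_norm hb
  have h : D.ru b (root_norm hb) = w * D.sru a ha * w⁻¹ := by
    rw [sru, conj_ru hw (mem_U_of_mem_Pi ha) (D.norm_one a ha) hnorm]
    exact Units.ext (by rw [ru_val, ru_val, hb'])
  rw [h]
  exact mul_mem (mul_mem hw (sru_mem_Wgrp ha)) (inv_mem hw)

end CoxeterDatum
namespace CoxeterDatum

variable {D : CoxeterDatum V}

/-- A word in the simple reflections. -/
def IsWord (D : CoxeterDatum V) (l : List (Module.End ℝ V)ˣ) : Prop := ∀ u ∈ l, u ∈ D.simples

lemma word_prod_mem {l : List (Module.End ℝ V)ˣ} (hl : D.IsWord l) : l.prod ∈ D.Wgrp :=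
  Subgroup.list_prod_mem _ (fun u hu => simples_subset_Wgrp (hl u hu))

lemma word_reverse_prod {l : List (Module.End ℝ V)ˣ} (hl : D.IsWord l) :
    l.reverse.prod = l.prod⁻¹ := by
  induction l with
  | nil => simp
  | cons u l ih =>
    have hu : u ∈ D.simples := hl u (List.mem_cons_self)
    have hl' : D.IsWord l := fun v hv => hl v (List.mem_cons_of_mem _ hv)
    rw [List.reverse_cons, List.prod_append, ih hl', List.prod_cons, List.prod_nil, mul_one,
      List.prod_cons, mul_inv_rev, simples_inv hu]

lemma exists_word {w : (Module.End ℝ V)ˣ} (hw : w ∈ D.Wgrp) :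
    ∃ l, D.IsWord l ∧ l.prod = w := by
  induction hw using Subgroup.closure_induction with
  | mem u hu => exact ⟨[u], fun v hv => by simpa using (List.mem_singleton.1 hv ▸ hu), by simp⟩
  | one => exact ⟨[], fun v hv => absurd hv List.not_mem_nil, rfl⟩
  | mul x y hx hy ihx ihy =>
    obtain ⟨l1, hl1, rfl⟩ := ihx
    obtain ⟨l2, hl2, rfl⟩ := ihy
    exact ⟨l1 ++ l2, fun v hv => (List.mem_append.1 hv).elim (hl1 v) (hl2 v),
      List.prod_append⟩
  | inv x hx ihx =>
    obtain ⟨l, hl, rfl⟩ := ihx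
    exact ⟨l.reverse, fun v hv => hl v (List.mem_reverse.1 hv), word_reverse_prod hl⟩

lemma len_le_of_word {l : List (Module.End ℝ V)ˣ} (hl : D.IsWord l)
    {w : (Module.End ℝ V)ˣ} (hp : l.prod = w) : D.len w ≤ l.length :=
  Nat.sInf_le ⟨l, rfl, hl, hp⟩

lemma exists_reduced_word {w : (Module.End ℝ V)ˣ} (hw : w ∈ D.Wgrp) :
    ∃ l, D.IsWord l ∧ l.prod = w ∧ l.length = D.len w := by
  obtain ⟨l0, hl0, hp0⟩ := exists_word hw
  have hne : {n | ∃ l : List (Module.End ℝ V)ˣ,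
      l.length = n ∧ (∀ u ∈ l, u ∈ D.simples) ∧ l.prod = w}.Nonempty :=
    ⟨l0.length, l0, rfl, hl0, hp0⟩
  obtain ⟨l, hlen, hl, hp⟩ := Nat.sInf_mem hne
  exact ⟨l, hl, hp, hlen⟩

lemma len_inv_le {w : (Module.End ℝ V)ˣ} (hw : w ∈ D.Wgrp) : D.len w⁻¹ ≤ D.len w := by
  obtain ⟨l, hl, hp, hlen⟩ := exists_reduced_word hw
  have := len_le_of_word (fun v hv => hl v (List.mem_reverse.1 hv))
    (word_reverse_prod hl)
  rwa [hp, List.length_reverse, hlen] at this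

lemma len_inv {w : (Module.End ℝ V)ˣ} (hw : w ∈ D.Wgrp) : D.len w⁻¹ = D.len w := by
  refine le_antisymm (len_inv_le hw) ?_
  have := len_inv_le (inv_mem hw)
  rwa [inv_inv] at this

lemma eq_one_of_len_eq_zero {w : (Module.End ℝ V)ˣ} (hw : w ∈ D.Wgrp)
    (h : D.len w = 0) : w = 1 := by
  obtain ⟨l, _, hp, hlen⟩ := exists_reduced_word hw
  rw [h] at hlen
  rw [← hp, List.length_eq_zero_iff.1 hlen, List.prod_nil]

end CoxeterDatum
namespace CoxeterDatum

variable {D : CoxeterDatum V}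

lemma B_nonpos_of_ne {p a : V} (hp : p ∈ D.Pi) (ha : a ∈ D.Pi) (hne : p ≠ a) :
    D.B p a ≤ 0 := by
  rcases D.offdiag p hp a ha hne with ⟨m, hm, h⟩ | h
  · have hm' : (2:ℝ) ≤ m := by exact_mod_cast hm
    have hmpos : (0:ℝ) < m := by linarith
    rw [h, neg_nonpos]
    apply Real.cos_nonneg_of_mem_Icc
    constructor
    · have h0 : 0 ≤ Real.pi / (m:ℝ) := div_nonneg Real.pi_pos.le hmpos.le
      have := Real.pi_pos
      linarith
    · rw [div_le_iff₀ hmpos]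
      nlinarith [Real.pi_pos]
  · linarith

lemma B_sum_left (F : Finset V) (f : V → ℝ) (y : V) :
    D.B (∑ p ∈ F, f p • p) y = ∑ p ∈ F, f p * D.B p y := by
  rw [map_sum, LinearMap.sum_apply]
  exact Finset.sum_congr rfl fun p _ => by rw [map_smul, LinearMap.smul_apply, smul_eq_mul]

/-- Key fact: if `c` is a positive root sent to a negative combination by the simple
reflection in `a`, then `c = a`. -/
lemma perm_fact {a c : V} (ha : a ∈ D.Pi) (hcP : c ∈ PLC D.Pi) (hcr : c ∈ D.roots)
    (hneg : -(D.refl a c) ∈ PLC D.Pi) : c = a := by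
  classical
  set μ : ℝ := 2 * D.B c a with hμ
  obtain ⟨s, lam, hsub, hlam, _, hc⟩ := hcP
  obtain ⟨s', nu, hsub', hnu, _, hd⟩ := hneg
  have hda : -(D.refl a c) = μ • a - c := by rw [refl_apply]; module
  set T : Finset V := insert a (s ∪ s') with hT
  have haT : a ∈ T := Finset.mem_insert_self _ _
  have hsT : s ⊆ T := fun p hp => Finset.mem_insert_of_mem (Finset.mem_union_left _ hp)
  have hs'T : s' ⊆ T := fun p hp => Finset.mem_insert_of_mem (Finset.mem_union_right _ hp)
  have hTPi : (↑T : Set V) ⊆ D.Pi := by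
    intro p hp
    rcases Finset.mem_insert.1 (by exact_mod_cast hp) with rfl | hp'
    · exact ha
    · rcases Finset.mem_union.1 hp' with h | h
      exacts [hsub h, hsub' h]
  set Λ : V → ℝ := fun p => (if p ∈ s then lam p else 0) + (if p ∈ s' then nu p else 0)
    with hΛ
  have hΛnonneg : ∀ p, 0 ≤ Λ p := by
    intro p
    have h1 : 0 ≤ (if p ∈ s then lam p else 0) := by
      split
      · exact hlam _ ‹_›
      · exact le_refl 0
    have h2 : 0 ≤ (if p ∈ s' then nu p else 0) := by
      split
      · exact hnu _ ‹_›
      · exact le_refl 0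
    exact add_nonneg h1 h2
  have hsum : ∑ p ∈ T, Λ p • p = μ • a := by
    have e1 : ∀ p ∈ T, Λ p • p
        = (if p ∈ s then lam p • p else 0) + (if p ∈ s' then nu p • p else 0) := by
      intro p _
      simp only [hΛ]
      simp only [add_smul]
      congr 1 <;> split <;> simp
    rw [Finset.sum_congr rfl e1, Finset.sum_add_distrib, Finset.sum_ite_mem,
      Finset.sum_ite_mem, Finset.inter_eq_right.mpr hsT, Finset.inter_eq_right.mpr hs'T,
      ← hc, ← hd, hda]
    module
  rcases le_or_gt μ (Λ a) with hcase | hcase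
  · -- all coefficients off `a` vanish and `c = a`
    set κ : V → ℝ := fun p => Λ p - (if p = a then μ else 0) with hκ
    have hκnonneg : ∀ p, 0 ≤ κ p := by
      intro p
      simp only [hκ]
      split
      · subst ‹p = a›; linarith
      · simpa using hΛnonneg p
    have hκsum : ∑ p ∈ T, κ p • p = 0 := by
      have : ∀ p ∈ T, κ p • p = Λ p • p - (if p = a then μ • p else 0) := by
        intro p _
        simp only [hκ]
        rw [sub_smul]
        congr 1
        split <;> simp
      rw [Finset.sum_congr rfl this, Finset.sum_sub_distrib, hsum,
        Finset.sum_ite_eq' T a (fun p => μ • p), if_pos haT, sub_self]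
    have hκzero : ∀ p ∈ T, κ p = 0 := by
      intro p hp
      by_contra hne
      have hpos : 0 < κ p := lt_of_le_of_ne (hκnonneg p) (Ne.symm hne)
      exact D.zero_not_plc ⟨T, κ, hTPi, fun q _ => hκnonneg q, ⟨p, hp, hpos⟩, hκsum.symm⟩
    have hlamzero : ∀ p ∈ s, p ≠ a → lam p = 0 := by
      intro p hps hpa
      have h := hκzero p (hsT hps)
      simp only [hκ, if_neg hpa, sub_zero] at h
      have h1 : 0 ≤ (if p ∈ s' then nu p else 0) := by
        split
        · exact hnu _ ‹_›
        · exact le_refl 0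
      have h2 := hlam p hps
      simp only [hΛ, if_pos hps] at h
      linarith
    have hca : c = (if a ∈ s then lam a else 0) • a := by
      rw [hc]
      have : ∀ p ∈ s, lam p • p = (if p = a then lam a • a else 0) := by
        intro p hps
        split
        · subst ‹p = a›; rfl
        · rw [hlamzero p hps ‹_›, zero_smul]
      rw [Finset.sum_congr rfl this, Finset.sum_ite_eq' s a (fun _ => lam a • a)]
      split <;> simp
    set t : ℝ := if a ∈ s then lam a else 0 with ht
    have htnonneg : 0 ≤ t := by
      simp only [ht]
      split
      · exact hlam _ ‹_›
      · exact le_refl 0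
    have hnorm : t * t = 1 := by
      have := root_norm hcr
      rw [hca] at this
      rw [map_smul, map_smul, LinearMap.smul_apply, smul_eq_mul, smul_eq_mul,
        D.norm_one a ha] at this
      linarith
    have : t = 1 := by nlinarith
    rw [hca, this, one_smul]
  · -- contradiction via the bilinear form
    exfalso
    have herase : (μ - Λ a) • a = ∑ p ∈ T.erase a, Λ p • p := by
      have h := Finset.sum_erase_add T (fun p => Λ p • p) haT
      rw [hsum] at h
      rw [sub_smul]
      rw [← h]
      module
    have hBpos : D.B ((μ - Λ a) • a) a = μ - Λ a := by
      rw [map_smul, LinearMap.smul_apply, smul_eq_mul, D.norm_one a ha, mul_one]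
    have hBnonpos : D.B (∑ p ∈ T.erase a, Λ p • p) a ≤ 0 := by
      rw [B_sum_left]
      apply Finset.sum_nonpos
      intro p hp
      have hpa : p ≠ a := Finset.ne_of_mem_erase hp
      have hpPi : p ∈ D.Pi := hTPi (Finset.mem_erase.1 hp).2
      exact mul_nonpos_of_nonneg_of_nonpos (hΛnonneg p) (B_nonpos_of_ne hpPi ha hpa)
    rw [herase] at hBpos
    rw [hBpos] at hBnonpos
    linarith

end CoxeterDatum
namespace CoxeterDatum

/-- Chebyshev-like sequence. -/
noncomputable def chebF (γ : ℝ) : ℕ → ℝ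
  | 0 => 0
  | 1 => 1
  | (n+2) => 2*γ*chebF γ (n+1) - chebF γ n

lemma chebF_zero (γ : ℝ) : chebF γ 0 = 0 := rfl
lemma chebF_one (γ : ℝ) : chebF γ 1 = 1 := rfl
lemma chebF_rec (γ : ℝ) (n : ℕ) : chebF γ (n+2) = 2*γ*chebF γ (n+1) - chebF γ n := rfl

/-- Integer-indexed Chebyshev-like sequence. -/
noncomputable def chebZ (γ : ℝ) (j : ℤ) : ℝ :=
  if 0 ≤ j then chebF γ j.toNat else -chebF γ (-j).toNat

lemma chebZ_ofNat (γ : ℝ) (n : ℕ) : chebZ γ (n : ℤ) = chebF γ n := by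
  rw [chebZ, if_pos (by positivity), Int.toNat_natCast]

lemma chebZ_neg (γ : ℝ) (j : ℤ) : chebZ γ (-j) = -chebZ γ j := by
  rcases lt_trichotomy j 0 with h | rfl | h
  · rw [chebZ, if_pos (by omega), chebZ, if_neg (by omega), neg_neg]
  · simp [chebZ, chebF_zero]
  · rw [chebZ, if_neg (by omega), chebZ, if_pos (by omega), neg_neg]

lemma chebZ_rec_nonneg (γ : ℝ) (j : ℤ) (hj : 0 ≤ j) :
    chebZ γ (j+2) = 2*γ*chebZ γ (j+1) - chebZ γ j := by
  obtain ⟨n, rfl⟩ : ∃ n : ℕ, j = (n : ℤ) := ⟨j.toNat, by omega⟩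
  have e1 : (n : ℤ) + 2 = ((n + 2 : ℕ) : ℤ) := by push_cast; ring
  have e2 : (n : ℤ) + 1 = ((n + 1 : ℕ) : ℤ) := by push_cast; ring
  rw [e1, e2, chebZ_ofNat, chebZ_ofNat, chebZ_ofNat, chebF_rec]

lemma chebZ_zero (γ : ℝ) : chebZ γ 0 = 0 := by
  rw [show (0:ℤ) = ((0:ℕ):ℤ) by norm_num, chebZ_ofNat, chebF_zero]

lemma chebZ_one (γ : ℝ) : chebZ γ 1 = 1 := by
  rw [show (1:ℤ) = ((1:ℕ):ℤ) by norm_num, chebZ_ofNat, chebF_one]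

lemma chebZ_rec (γ : ℝ) (j : ℤ) : chebZ γ (j+2) = 2*γ*chebZ γ (j+1) - chebZ γ j := by
  rcases le_or_gt 0 j with h | h
  · exact chebZ_rec_nonneg γ j h
  · rcases eq_or_lt_of_le (by omega : j ≤ -1) with rfl | h2
    · norm_num
      rw [chebZ_one, chebZ_zero, show (-1:ℤ) = -(1:ℤ) by norm_num, chebZ_neg, chebZ_one]
      ring
    · have hrec := chebZ_rec_nonneg γ (-j-2) (by omega)
      have e1 : -j-2+2 = -j := by ring
      have e2 : -j-2+1 = -(j+1) := by ring
      have e3 : -j-2 = -(j+2) := by ring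
      rw [e1, e2, e3, chebZ_neg, chebZ_neg, chebZ_neg] at hrec
      linarith

lemma chebZ_rec' (γ : ℝ) (j : ℤ) : chebZ γ (j-2) = 2*γ*chebZ γ (j-1) - chebZ γ j := by
  have := chebZ_rec γ (j-2)
  have e1 : j - 2 + 2 = j := by ring
  have e2 : j - 2 + 1 = j - 1 := by ring
  rw [e1, e2] at this
  linarith

section GeOne

variable {γ : ℝ} (hγ : 1 ≤ γ)
include hγ

lemma chebF_ge_one : ∀ n : ℕ, 1 ≤ chebF γ (n+1) ∧ chebF γ n ≤ chebF γ (n+1) ∧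
    0 ≤ chebF γ n := by
  intro n
  induction n with
  | zero =>
    refine ⟨?_, ?_, ?_⟩
    · rw [chebF_one]
    · rw [chebF_zero, chebF_one]; norm_num
    · rw [chebF_zero]
  | succ n ih =>
    obtain ⟨h1, h2, h3⟩ := ih
    rw [chebF_rec]
    refine ⟨by nlinarith, by nlinarith, by linarith⟩

lemma chebZ_sign_ge_one (j : ℤ) :
    ((0 ≤ chebZ γ j ∧ 0 ≤ chebZ γ (j-1)) ∨ (chebZ γ j ≤ 0 ∧ chebZ γ (j-1) ≤ 0)) ∧
      ¬(chebZ γ j = 0 ∧ chebZ γ (j-1) = 0) := by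
  have key : ∀ k : ℤ, 1 ≤ k → 1 ≤ chebZ γ k := by
    intro k hk
    rw [chebZ, if_pos (by omega)]
    obtain ⟨n, hn⟩ : ∃ n : ℕ, k.toNat = n + 1 := ⟨k.toNat - 1, by omega⟩
    rw [hn]
    exact (chebF_ge_one hγ n).1
  have nonneg : ∀ k : ℤ, 0 ≤ k → 0 ≤ chebZ γ k := by
    intro k hk
    rcases eq_or_lt_of_le hk with rfl | hk'
    · rw [chebZ_zero]
    · linarith [key k (by omega)]
  have nonpos : ∀ k : ℤ, k ≤ 0 → chebZ γ k ≤ 0 := by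
    intro k hk
    rcases eq_or_lt_of_le hk with rfl | hk'
    · rw [chebZ_zero]
    · have h1 : 1 ≤ chebZ γ (-k) := key (-k) (by omega)
      have hneg : chebZ γ (-k) = -chebZ γ k := chebZ_neg γ k
      linarith
  rcases le_or_gt 1 j with h | h
  · refine ⟨Or.inl ⟨nonneg j (by omega), nonneg (j-1) (by omega)⟩, fun ⟨h1, _⟩ => ?_⟩
    linarith [key j h]
  · refine ⟨Or.inr ⟨nonpos j (by omega), nonpos (j-1) (by omega)⟩, fun ⟨_, h2⟩ => ?_⟩
    have h1 : 1 ≤ chebZ γ (-(j-1)) := key _ (by omega)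
    have hneg : chebZ γ (-(j-1)) = -chebZ γ (j-1) := chebZ_neg γ (j-1)
    linarith

end GeOne

section Cos

variable {m : ℕ} (hm : 2 ≤ m)
include hm

lemma sin_pos_div_m : 0 < Real.sin (Real.pi / m) := by
  have hm0 : (0:ℝ) < m := by positivity
  apply Real.sin_pos_of_pos_of_lt_pi
  · positivity
  · have hm2 : (2:ℝ) ≤ m := by exact_mod_cast hm
    rw [div_lt_iff₀ hm0]
    nlinarith [Real.pi_pos]

lemma chebF_cos : ∀ n : ℕ, chebF (Real.cos (Real.pi / m)) n
    = Real.sin (n * (Real.pi / m)) / Real.sin (Real.pi / m) := by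
  set θ := Real.pi / m with hθ
  intro n
  induction n using Nat.twoStepInduction with
  | zero => simp [chebF_zero]
  | one =>
    rw [chebF_one, show ((1:ℕ):ℝ) = 1 by norm_num, one_mul, div_self]
    exact ne_of_gt (sin_pos_div_m hm)
  | more n ih1 ih2 =>
    rw [chebF_rec, ih2, ih1]
    have e1 : ((n+2:ℕ):ℝ) * θ = ((n+1:ℕ):ℝ)*θ + θ := by push_cast; ring
    have e2 : ((n:ℕ):ℝ) * θ = ((n+1:ℕ):ℝ)*θ - θ := by push_cast; ring
    rw [e1, e2, Real.sin_add, Real.sin_sub]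
    have hs := sin_pos_div_m hm
    field_simp
    ring

lemma chebZ_cos (j : ℤ) : chebZ (Real.cos (Real.pi / m)) j
    = Real.sin (j * (Real.pi / m)) / Real.sin (Real.pi / m) := by
  rcases le_or_gt 0 j with h | h
  · obtain ⟨n, rfl⟩ : ∃ n : ℕ, j = (n:ℤ) := ⟨j.toNat, by omega⟩
    rw [chebZ_ofNat, chebF_cos hm]
    norm_num
  · obtain ⟨n, rfl⟩ : ∃ n : ℕ, j = -(n:ℤ) := ⟨(-j).toNat, by omega⟩
    rw [chebZ_neg, chebZ_ofNat, chebF_cos hm]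
    push_cast
    rw [neg_mul, Real.sin_neg]
    ring

lemma chebZ_cos_sign (j : ℤ) :
    ((0 ≤ chebZ (Real.cos (Real.pi / m)) j ∧ 0 ≤ chebZ (Real.cos (Real.pi / m)) (j-1)) ∨
      (chebZ (Real.cos (Real.pi / m)) j ≤ 0 ∧ chebZ (Real.cos (Real.pi / m)) (j-1) ≤ 0)) ∧
    ¬(chebZ (Real.cos (Real.pi / m)) j = 0 ∧ chebZ (Real.cos (Real.pi / m)) (j-1) = 0) := by
  have hm0 : (0:ℝ) < m := by positivity
  have hm2 : (2:ℝ) ≤ m := by exact_mod_cast hm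
  have hs : 0 < Real.sin (Real.pi/m) := sin_pos_div_m hm
  have hθpos : 0 < Real.pi/m := by positivity
  have hmθ : (m:ℝ) * (Real.pi/m) = Real.pi := by field_simp
  have hdecomp : ∀ (t s : ℤ), Real.sin (((t*(m:ℤ)+s : ℤ):ℝ)*(Real.pi/m))
      = (-1:ℝ)^t * Real.sin ((s:ℝ)*(Real.pi/m)) := by
    intro t s
    have e : ((t*(m:ℤ)+s : ℤ):ℝ)*(Real.pi/m) = (s:ℝ)*(Real.pi/m) + (t:ℤ) * Real.pi := by
      push_cast
      field_simp
      ring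
    rw [e, Real.sin_add_int_mul_pi]
  have hval : ∀ (t s : ℤ), chebZ (Real.cos (Real.pi/m)) (t*(m:ℤ)+s)
      = (-1:ℝ)^t * Real.sin ((s:ℝ)*(Real.pi/m)) / Real.sin (Real.pi/m) := by
    intro t s
    rw [chebZ_cos hm, ← hdecomp t s]
  have hnonneg : ∀ s : ℤ, 0 ≤ s → s ≤ m → 0 ≤ Real.sin ((s:ℝ)*(Real.pi/m)) := by
    intro s h0 h1
    have hc0 : (0:ℝ) ≤ s := by exact_mod_cast h0
    have hc1 : (s:ℝ) ≤ m := by exact_mod_cast h1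
    apply Real.sin_nonneg_of_nonneg_of_le_pi
    · positivity
    · have h3 : (s:ℝ)*(Real.pi/m) ≤ (m:ℝ)*(Real.pi/m) := mul_le_mul_of_nonneg_right hc1 hθpos.le
      linarith [hmθ]
  have hpos : ∀ s : ℤ, 1 ≤ s → s < m → 0 < Real.sin ((s:ℝ)*(Real.pi/m)) := by
    intro s h0 h1
    have hc0 : (1:ℝ) ≤ s := by exact_mod_cast h0
    have hc1 : (s:ℝ) < m := by exact_mod_cast h1
    apply Real.sin_pos_of_pos_of_lt_pi
    · nlinarith
    · have h3 : (s:ℝ)*(Real.pi/m) < (m:ℝ)*(Real.pi/m) := mul_lt_mul_of_pos_right hc1 hθpos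
      linarith [hmθ]
  set q : ℤ := j / (m:ℤ) with hq
  set r : ℤ := j % (m:ℤ) with hr
  have hj : j = q * (m:ℤ) + r := by
    rw [hq, hr, mul_comm]
    exact (Int.mul_ediv_add_emod j (m:ℤ)).symm
  have hr0 : 0 ≤ r := Int.emod_nonneg j (by omega)
  have hrm : r < (m:ℤ) := Int.emod_lt_of_pos j (by exact_mod_cast (by omega : 0 < m))
  have h1 : chebZ (Real.cos (Real.pi/m)) j
      = (-1:ℝ)^q * Real.sin ((r:ℝ)*(Real.pi/m)) / Real.sin (Real.pi/m) := by
    rw [show j = q*(m:ℤ)+r from hj, hval]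
  rcases eq_or_lt_of_le hr0 with hr1 | hr1
  · -- r = 0
    have h2 : chebZ (Real.cos (Real.pi/m)) (j-1)
        = (-1:ℝ)^(q-1) * Real.sin ((((m:ℤ)-1 : ℤ):ℝ)*(Real.pi/m)) / Real.sin (Real.pi/m) := by
      rw [show j-1 = (q-1)*(m:ℤ)+((m:ℤ)-1) by rw [hj, ← hr1]; ring, hval]
    have hj0 : chebZ (Real.cos (Real.pi/m)) j = 0 := by
      rw [h1, ← hr1]
      norm_num
    have hsin2 : 0 < Real.sin ((((m:ℤ)-1 : ℤ):ℝ)*(Real.pi/m)) := hpos _ (by omega) (by omega)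
    have hj1ne : chebZ (Real.cos (Real.pi/m)) (j-1) ≠ 0 := by
      rw [h2]
      apply div_ne_zero _ (ne_of_gt hs)
      exact mul_ne_zero (zpow_ne_zero _ (by norm_num)) (ne_of_gt hsin2)
    refine ⟨?_, fun ⟨_, hz⟩ => hj1ne hz⟩
    rcases le_or_gt 0 (chebZ (Real.cos (Real.pi/m)) (j-1)) with h | h
    · exact Or.inl ⟨le_of_eq hj0.symm, h⟩
    · exact Or.inr ⟨le_of_eq hj0, h.le⟩
  · -- 1 ≤ r
    have h2 : chebZ (Real.cos (Real.pi/m)) (j-1)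
        = (-1:ℝ)^q * Real.sin (((r-1 : ℤ):ℝ)*(Real.pi/m)) / Real.sin (Real.pi/m) := by
      rw [show j-1 = q*(m:ℤ)+(r-1) by rw [hj]; ring, hval]
    have hsinr : 0 < Real.sin ((r:ℝ)*(Real.pi/m)) := hpos r (by omega) hrm
    have hsinr1 : 0 ≤ Real.sin (((r-1 : ℤ):ℝ)*(Real.pi/m)) := hnonneg (r-1) (by omega) (by omega)
    rcases Int.even_or_odd q with hq2 | hq2
    · have hpow : (-1:ℝ)^q = 1 := Even.neg_one_zpow hq2
      rw [hpow, one_mul] at h1 h2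
      refine ⟨Or.inl ⟨by rw [h1]; positivity, by rw [h2]; positivity⟩, fun ⟨hz, _⟩ => ?_⟩
      rw [h1] at hz
      exact (ne_of_gt (div_pos hsinr hs)) hz
    · have hpow : (-1:ℝ)^q = -1 := Odd.neg_one_zpow hq2
      rw [hpow, neg_one_mul] at h1 h2
      have ha1 : chebZ (Real.cos (Real.pi/m)) j ≤ 0 := by
        rw [h1, neg_div, neg_nonpos]
        exact div_nonneg hsinr.le hs.le
      have ha2 : chebZ (Real.cos (Real.pi/m)) (j-1) ≤ 0 := by
        rw [h2, neg_div, neg_nonpos]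
        exact div_nonneg hsinr1 hs.le
      refine ⟨Or.inr ⟨ha1, ha2⟩, fun ⟨hz, _⟩ => ?_⟩
      rw [h1, neg_div, neg_eq_zero] at hz
      exact (ne_of_gt (div_pos hsinr hs)) hz

end Cos

end CoxeterDatum
section InvolutionWords

variable {G : Type*} [Group G]

lemma prod_reverse_of_involutions {l : List G} (h : ∀ v ∈ l, v * v = 1) :
    l.reverse.prod = l.prod⁻¹ := by
  induction l with
  | nil => simp
  | cons u l ih =>
    have hu : u * u = 1 := h u (List.mem_cons_self)
    have hl : ∀ v ∈ l, v * v = 1 := fun v hv => h v (List.mem_cons_of_mem _ hv)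
    rw [List.reverse_cons, List.prod_append, ih hl, List.prod_cons, List.prod_nil, mul_one,
      List.prod_cons, mul_inv_rev, inv_eq_of_mul_eq_one_right hu]

lemma closure_pair_word {x y : G} (hx : x*x = 1) (hy : y*y = 1) {u : G}
    (hu : u ∈ Subgroup.closure {x, y}) :
    ∃ l : List G, (∀ v ∈ l, v = x ∨ v = y) ∧ l.prod = u := by
  induction hu using Subgroup.closure_induction with
  | mem v hv =>
    rcases hv with rfl | rfl
    · exact ⟨[v], fun w hw => Or.inl (List.mem_singleton.1 hw), by simp⟩
    · exact ⟨[v], fun w hw => Or.inr (List.mem_singleton.1 hw), by simp⟩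
  | one => exact ⟨[], fun w hw => absurd hw List.not_mem_nil, rfl⟩
  | mul v w hv hw ihv ihw =>
    obtain ⟨l1, hl1, rfl⟩ := ihv
    obtain ⟨l2, hl2, rfl⟩ := ihw
    exact ⟨l1 ++ l2, fun v hv => (List.mem_append.1 hv).elim (hl1 v) (hl2 v), List.prod_append⟩
  | inv v hv ihv =>
    obtain ⟨l, hl, rfl⟩ := ihv
    refine ⟨l.reverse, fun w hw => hl w (List.mem_reverse.1 hw),
      prod_reverse_of_involutions ?_⟩
    intro w hw
    rcases hl w hw with rfl | rfl
    exacts [hx, hy]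

end InvolutionWords

namespace CoxeterDatum

variable {D : CoxeterDatum V}

lemma gamma_sign {a b : V} (ha : a ∈ D.Pi) (hb : b ∈ D.Pi) (hab : a ≠ b) (j : ℤ) :
    ((0 ≤ chebZ (-D.B a b) j ∧ 0 ≤ chebZ (-D.B a b) (j-1)) ∨
      (chebZ (-D.B a b) j ≤ 0 ∧ chebZ (-D.B a b) (j-1) ≤ 0)) ∧
    ¬(chebZ (-D.B a b) j = 0 ∧ chebZ (-D.B a b) (j-1) = 0) := by
  rcases D.offdiag a ha b hb hab with ⟨m, hm, h⟩ | h
  · rw [show -D.B a b = Real.cos (Real.pi/m) by rw [h]; ring]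
    exact chebZ_cos_sign hm j
  · exact chebZ_sign_ge_one (by linarith) j

lemma rank2 {a b : V} (ha : a ∈ D.Pi) (hb : b ∈ D.Pi) (hab : a ≠ b) :
    ∀ u ∈ Subgroup.closure {D.sru a ha, D.sru b hb},
      ∃ lam mu : ℝ, (u : Module.End ℝ V) a = lam • a + mu • b ∧
        ((0 ≤ lam ∧ 0 ≤ mu) ∨ (lam ≤ 0 ∧ mu ≤ 0)) ∧ ¬(lam = 0 ∧ mu = 0) := by
  intro u hu
  set γ : ℝ := -D.B a b with hγ
  have hba : D.B b a = -γ := by rw [hγ, D.symm b hb a ha]; ring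
  have hab' : D.B a b = -γ := by rw [hγ]; ring
  have hxa : D.refl a a = -a := refl_self a (D.norm_one a ha)
  have hyb : D.refl b b = -b := refl_self b (D.norm_one b hb)
  have hxb : D.refl a b = b + (2*γ) • a := by
    rw [refl_apply, hba]
    module
  have hya : D.refl b a = a + (2*γ) • b := by
    rw [refl_apply, hab']
    module
  obtain ⟨l, hl, hprod⟩ := closure_pair_word (ru_mul_self _ _) (ru_mul_self _ _) hu
  have key : ∃ j : ℤ,
      (l.prod : Module.End ℝ V) a = chebZ γ j • a + chebZ γ (j-1) • b ∨
      (l.prod : Module.End ℝ V) a = chebZ γ (j-1) • a + chebZ γ j • b := by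
    clear hprod hu
    induction l with
    | nil =>
      refine ⟨1, Or.inl ?_⟩
      rw [List.prod_nil, Units.val_one, Module.End.one_apply, chebZ_one,
        show (1:ℤ)-1 = 0 by ring, chebZ_zero]
      module
    | cons v l ih =>
      obtain ⟨j, hj⟩ := ih (fun w hw => hl w (List.mem_cons_of_mem _ hw))
      have hv := hl v (List.mem_cons_self)
      rw [List.prod_cons, unit_apply_mul]
      have recA : chebZ γ (j-1-1) = 2*γ*chebZ γ (j-1) - chebZ γ j := by
        rw [show j-1-1 = j-2 by ring]
        exact chebZ_rec' γ j
      have recB : chebZ γ (j+1) = 2*γ*chebZ γ j - chebZ γ (j-1) := by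
        have := chebZ_rec γ (j-1)
        rw [show j-1+2 = j+1 by ring, show j-1+1 = j by ring] at this
        exact this
      rcases hv with rfl | rfl
      · -- v = sru a
        rcases hj with hj | hj
        · refine ⟨j-1, Or.inr ?_⟩
          rw [hj, ru_val, map_add, map_smul, map_smul, hxa, hxb, recA]
          module
        · refine ⟨j+1, Or.inl ?_⟩
          rw [hj, ru_val, map_add, map_smul, map_smul, hxa, hxb,
            show j+1-1 = j by ring, recB]
          module
      · -- v = sru b
        rcases hj with hj | hj
        · refine ⟨j+1, Or.inr ?_⟩
          rw [hj, ru_val, map_add, map_smul, map_smul, hya, hyb,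
            show j+1-1 = j by ring, recB]
          module
        · refine ⟨j-1, Or.inl ?_⟩
          rw [hj, ru_val, map_add, map_smul, map_smul, hya, hyb, recA]
          module
  obtain ⟨j, hj | hj⟩ := key
  · obtain ⟨hsgn, hnz⟩ := gamma_sign ha hb hab j
    exact ⟨chebZ γ j, chebZ γ (j-1), by rw [← hprod, hj], hsgn, hnz⟩
  · obtain ⟨hsgn, hnz⟩ := gamma_sign ha hb hab j
    refine ⟨chebZ γ (j-1), chebZ γ j, by rw [← hprod, hj], ?_, ?_⟩
    · tauto
    · tauto

end CoxeterDatum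
namespace CoxeterDatum

variable {D : CoxeterDatum V}

lemma crossing {w : (Module.End ℝ V)ˣ} {l : List (Module.End ℝ V)ˣ}
    (hl : D.IsWord l) (hprod : l.prod = w) {b : V} (hbr : b ∈ D.roots) (hbP : b ∈ PLC D.Pi)
    (hdich : ∀ i, 1 ≤ i → i < l.length →
      (((l.drop i).prod : Module.End ℝ V) b ∈ PLC D.Pi ∨
        -(((l.drop i).prod : Module.End ℝ V) b) ∈ PLC D.Pi))
    (hneg : -((w : Module.End ℝ V) b) ∈ PLC D.Pi) :
    ∃ l' : List (Module.End ℝ V)ˣ, D.IsWord l' ∧ l'.length + 1 = l.length ∧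
      l'.prod = w * D.ru b (root_norm hbr) := by
  classical
  set n := l.length with hn
  set z : ℕ → V := fun i => (((l.drop i).prod : (Module.End ℝ V)ˣ) : Module.End ℝ V) b
    with hzdef
  have hz0 : z 0 = (w : Module.End ℝ V) b := by
    simp only [hzdef, List.drop_zero, hprod]
  have hzn : z n = b := by
    simp only [hzdef, hn, List.drop_length, List.prod_nil, Units.val_one,
      Module.End.one_apply]
  have hdrop_word : ∀ i, D.IsWord (l.drop i) := fun i u hu => hl u (List.mem_of_mem_drop hu)
  have hdrop_mem : ∀ i, (l.drop i).prod ∈ D.Wgrp := fun i => word_prod_mem (hdrop_word i)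
  have hzroot : ∀ i, z i ∈ D.roots := fun i => roots_smul_mem (hdrop_mem i) hbr
  set Ip : Set ℕ := {i | z i ∈ PLC D.Pi} with hIp
  have hIpne : Ip.Nonempty := ⟨n, by rw [hIp]; exact Set.mem_setOf.2 (hzn ▸ hbP)⟩
  set i₀ := sInf Ip with hi₀
  have hi₀mem : z i₀ ∈ PLC D.Pi := Nat.sInf_mem hIpne
  have hi₀le : i₀ ≤ n := Nat.sInf_le (by rw [hIp]; exact Set.mem_setOf.2 (hzn ▸ hbP))
  have hi₀pos : i₀ ≠ 0 := by
    intro h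
    rw [h] at hi₀mem
    rw [hz0] at hi₀mem
    exact plc_neg_not_plc D hi₀mem hneg
  set i := i₀ - 1 with hidef
  have hi₀i : i₀ = i + 1 := by omega
  have hilt : i < n := by omega
  have hzi_neg : -(z i) ∈ PLC D.Pi := by
    rcases Nat.eq_zero_or_pos i with h | h
    · rw [h, hz0]
      exact hneg
    · rcases hdich i h (by omega) with hc | hc
      · exfalso
        have : i ∈ Ip := hc
        have := Nat.sInf_le this
        omega
      · exact hc
  have hcons : l.drop i = l[i] :: l.drop (i+1) := List.drop_eq_getElem_cons (by omega)
  have hzi : z i = (l[i] : Module.End ℝ V) (z (i+1)) := by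
    simp only [hzdef, hcons, List.prod_cons, unit_apply_mul]
  have hgetmem : l[i] ∈ D.simples := hl _ (List.getElem_mem (by omega))
  obtain ⟨β, hβ, hval⟩ := hgetmem
  have hzi1plc : z (i+1) ∈ PLC D.Pi := by rw [← hi₀i]; exact hi₀mem
  have hrefl_neg : -(D.refl β (z (i+1))) ∈ PLC D.Pi := by
    rw [← hval, ← hzi]
    exact hzi_neg
  have hzi1β : z (i+1) = β := perm_fact hβ hzi1plc (hzroot (i+1)) hrefl_neg
  have hu'mem : (l.drop (i+1)).prod ∈ D.Wgrp := hdrop_mem (i+1)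
  have hu'b : (((l.drop (i+1)).prod : (Module.End ℝ V)ˣ) : Module.End ℝ V) b = β :=
    hzi1β
  have hnormb : D.B ((((l.drop (i+1)).prod : (Module.End ℝ V)ˣ) : Module.End ℝ V) b)
      ((((l.drop (i+1)).prod : (Module.End ℝ V)ˣ) : Module.End ℝ V) b) = 1 := by
    rw [hu'b]
    exact D.norm_one β hβ
  have hconj : (l.drop (i+1)).prod * D.ru b (root_norm hbr) * ((l.drop (i+1)).prod)⁻¹
      = l[i] := by
    rw [conj_ru hu'mem (roots_subset_U hbr) (root_norm hbr) hnormb]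
    refine (Units.ext ?_).symm
    rw [hval, ru_val, hu'b]
  have hswap : (l.drop (i+1)).prod * D.ru b (root_norm hbr) = l[i] * (l.drop (i+1)).prod := by
    rw [← hconj]
    group
  have hgetsq : l[i] * l[i] = 1 := by
    have h5 : l[i] = D.sru β hβ := Units.ext (by rw [hval]; rfl)
    rw [h5]
    exact ru_mul_self _ _
  refine ⟨l.take i ++ l.drop (i+1), ?_, ?_, ?_⟩
  · intro u hu
    rcases List.mem_append.1 hu with h | h
    · exact hl u (List.mem_of_mem_take h)
    · exact hl u (List.mem_of_mem_drop h)
  · rw [List.length_append, List.length_take, List.length_drop]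
    omega
  · rw [List.prod_append, ← hprod, ← List.prod_take_mul_prod_drop l i, hcons, List.prod_cons,
      mul_assoc, mul_assoc, hswap, ← mul_assoc l[i], hgetsq, one_mul]

theorem main_dichotomy : ∀ n : ℕ, ∀ w ∈ D.Wgrp, D.len w = n → ∀ a, ∀ ha : a ∈ D.Pi,
    (((w : Module.End ℝ V) a ∈ PLC D.Pi ∨ -((w : Module.End ℝ V) a) ∈ PLC D.Pi) ∧
    (-((w : Module.End ℝ V) a) ∈ PLC D.Pi → D.len (w * D.sru a ha) < n)) := by
  intro n
  induction n using Nat.strong_induction_on with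
  | _ n ih =>
  intro w hw hlen a ha
  have clause2 : -((w : Module.End ℝ V) a) ∈ PLC D.Pi → D.len (w * D.sru a ha) < n := by
    intro hneg
    obtain ⟨l, hl, hprod, hlength⟩ := exists_reduced_word hw
    have hlenl : l.length = n := by rw [hlength, hlen]
    have hdich : ∀ i, 1 ≤ i → i < l.length →
        (((l.drop i).prod : Module.End ℝ V) a ∈ PLC D.Pi ∨
          -(((l.drop i).prod : Module.End ℝ V) a) ∈ PLC D.Pi) := by
      intro i h1 h2
      have hmem : (l.drop i).prod ∈ D.Wgrp :=
        word_prod_mem (fun u hu => hl u (List.mem_of_mem_drop hu))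
      have hlt : D.len (l.drop i).prod < n := by
        have := len_le_of_word (fun u hu => hl u (List.mem_of_mem_drop hu))
          (rfl : (l.drop i).prod = (l.drop i).prod)
        rw [List.length_drop] at this
        omega
      exact (ih _ hlt _ hmem rfl a ha).1
    obtain ⟨l', hl', hlen', hprod'⟩ := crossing hl hprod (mem_roots_of_mem_Pi ha)
      (mem_PLC_of_mem ha) hdich hneg
    have : D.len (w * D.sru a ha) ≤ l'.length := len_le_of_word hl' hprod'
    omega
  refine ⟨?_, clause2⟩
  rcases Nat.eq_zero_or_pos n with rfl | hn
  · have hw1 : w = 1 := eq_one_of_len_eq_zero hw hlen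
    subst hw1
    left
    rw [Units.val_one, Module.End.one_apply]
    exact mem_PLC_of_mem ha
  obtain ⟨l, hl, hprod, hlength⟩ := exists_reduced_word hw
  have hlenl : l.length = n := by rw [hlength, hlen]
  rcases List.eq_nil_or_concat l with rfl | ⟨l1, t, rfl⟩
  · simp at hlenl; omega
  have ht : t ∈ D.simples := hl t (by simp)
  obtain ⟨c, hc, rfl⟩ := simples_val ht
  have hl1 : D.IsWord l1 := fun u hu => hl u (by simp [hu])
  have hwt : w * D.sru c hc = l1.prod := by
    have : l1.prod * (D.sru c hc * D.sru c hc) = l1.prod := by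
      rw [show D.sru c hc * D.sru c hc = 1 from ru_mul_self _ _, mul_one]
    rw [← hprod, List.concat_eq_append, List.prod_append, List.prod_cons, List.prod_nil,
      mul_one, mul_assoc, this]
  have hlenwt : D.len (w * D.sru c hc) ≤ n - 1 := by
    have h1 := len_le_of_word hl1 hwt.symm
    have h2 : l1.length = n - 1 := by
      have h6 := hlenl
      rw [List.concat_eq_append, List.length_append, List.length_cons, List.length_nil] at h6
      omega
    omega
  by_cases hca : c = a
  · subst hca
    have hmemwt : w * D.sru c hc ∈ D.Wgrp := mul_mem hw (sru_mem_Wgrp hc)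
    have h2 := (ih (D.len (w * D.sru c hc)) (by omega) _ hmemwt rfl c hc).1
    have he : ((w * D.sru c hc : (Module.End ℝ V)ˣ) : Module.End ℝ V) c
        = -((w : Module.End ℝ V) c) := by
      rw [unit_apply_mul]
      show (w : Module.End ℝ V) (D.refl c c) = _
      rw [refl_self c (D.norm_one c hc), map_neg]
    rcases h2 with h | h
    · right
      rw [he] at h
      exact h
    · left
      rw [he, neg_neg] at h
      exact h
  · -- coset argument
    have hac : a ≠ c := fun h => hca h.symm
    set Wp := Subgroup.closure {D.sru a ha, D.sru c hc} with hWp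
    have hWpW : ∀ u ∈ Wp, u ∈ D.Wgrp := by
      intro u hu
      refine (Subgroup.closure_le D.Wgrp).2 ?_ hu
      rintro v (rfl | rfl)
      exacts [sru_mem_Wgrp ha, sru_mem_Wgrp hc]
    set A := {k | ∃ u ∈ Wp, D.len (w * u) = k} with hA
    have hAne : A.Nonempty := ⟨D.len w, 1, one_mem _, by rw [mul_one]⟩
    obtain ⟨u₀, hu₀, hu₀len⟩ := Nat.sInf_mem hAne
    have hminle : sInf A ≤ D.len (w * D.sru c hc) :=
      Nat.sInf_le ⟨D.sru c hc, Subgroup.subset_closure (by simp), rfl⟩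
    have hm₁lt : sInf A < n := by omega
    have hvmem : w * u₀ ∈ D.Wgrp := mul_mem hw (hWpW _ hu₀)
    have hva : ((w * u₀ : (Module.End ℝ V)ˣ) : Module.End ℝ V) a ∈ PLC D.Pi := by
      rcases (ih _ hm₁lt _ hvmem hu₀len a ha).1 with h | h
      · exact h
      · exfalso
        have hlt := (ih _ hm₁lt _ hvmem hu₀len a ha).2 h
        have : sInf A ≤ D.len (w * u₀ * D.sru a ha) := by
          refine Nat.sInf_le ⟨u₀ * D.sru a ha, mul_mem hu₀ (Subgroup.subset_closure (by simp)), ?_⟩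
          rw [mul_assoc]
        omega
    have hvc : ((w * u₀ : (Module.End ℝ V)ˣ) : Module.End ℝ V) c ∈ PLC D.Pi := by
      rcases (ih _ hm₁lt _ hvmem hu₀len c hc).1 with h | h
      · exact h
      · exfalso
        have hlt := (ih _ hm₁lt _ hvmem hu₀len c hc).2 h
        have : sInf A ≤ D.len (w * u₀ * D.sru c hc) := by
          refine Nat.sInf_le ⟨u₀ * D.sru c hc, mul_mem hu₀ (Subgroup.subset_closure (by simp)), ?_⟩
          rw [mul_assoc]
        omega
    obtain ⟨lam, mu, heq, hsgn, hnz⟩ := rank2 ha hc hac u₀⁻¹ (inv_mem hu₀)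
    have hwa : (w : Module.End ℝ V) a
        = lam • (((w * u₀ : (Module.End ℝ V)ˣ) : Module.End ℝ V) a)
          + mu • (((w * u₀ : (Module.End ℝ V)ˣ) : Module.End ℝ V) c) := by
      have hw' : w = (w * u₀) * u₀⁻¹ := by group
      conv_lhs => rw [hw']
      rw [unit_apply_mul, heq, map_add, map_smul, map_smul]
    rcases hsgn with ⟨h1, h2⟩ | ⟨h1, h2⟩
    · left
      rw [hwa]
      exact plc_combo hva hvc h1 h2 hnz
    · right
      have hneg' : -((w : Module.End ℝ V) a)
          = (-lam) • (((w * u₀ : (Module.End ℝ V)ˣ) : Module.End ℝ V) a)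
            + (-mu) • (((w * u₀ : (Module.End ℝ V)ˣ) : Module.End ℝ V) c) := by
        rw [hwa]
        module
      rw [hneg']
      refine plc_combo hva hvc (by linarith) (by linarith) ?_
      rintro ⟨h3, h4⟩
      exact hnz ⟨by linarith, by linarith⟩

end CoxeterDatum
namespace CoxeterDatum

variable {D : CoxeterDatum V}

lemma root_dichotomy {x : V} (hx : x ∈ D.roots) : x ∈ PLC D.Pi ∨ -x ∈ PLC D.Pi := by
  obtain ⟨w, hw, a, ha, rfl⟩ := hx
  exact (main_dichotomy (D.len w) w hw rfl a ha).1

lemma descent {w : (Module.End ℝ V)ˣ} (hw : w ∈ D.Wgrp) {b : V} (hbr : b ∈ D.roots)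
    (hbP : b ∈ PLC D.Pi) (hneg : -((w : Module.End ℝ V) b) ∈ PLC D.Pi) :
    D.len (w * D.ru b (root_norm hbr)) < D.len w := by
  obtain ⟨l, hl, hprod, hlength⟩ := exists_reduced_word hw
  have hdich : ∀ i, 1 ≤ i → i < l.length →
      (((l.drop i).prod : Module.End ℝ V) b ∈ PLC D.Pi ∨
        -(((l.drop i).prod : Module.End ℝ V) b) ∈ PLC D.Pi) := by
    intro i _ _
    exact root_dichotomy
      (roots_smul_mem (word_prod_mem (fun u hu => hl u (List.mem_of_mem_drop hu))) hbr)
  obtain ⟨l', hl', hlen', hprod'⟩ := crossing hl hprod hbr hbP hdich hneg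
  have := len_le_of_word hl' hprod'
  omega

lemma dp_le {x : V} {v : (Module.End ℝ V)ˣ} (hv : v ∈ D.Wgrp)
    (h : (v : Module.End ℝ V) x ∈ D.negRoots) : D.dp x ≤ D.len v :=
  Nat.sInf_le ⟨v, hv, rfl, h⟩

lemma dp_pos {x : V} (hx : x ∈ D.posRoots) {v : (Module.End ℝ V)ˣ} (hv : v ∈ D.Wgrp)
    (h : (v : Module.End ℝ V) x ∈ D.negRoots) : 1 ≤ D.dp x := by
  by_contra hlt
  push_neg at hlt
  have h0 : D.dp x = 0 := by omega
  have hne : {n | ∃ w ∈ D.Wgrp, D.len w = n ∧ (w : Module.End ℝ V) x ∈ D.negRoots}.Nonempty :=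
    ⟨D.len v, v, hv, rfl, h⟩
  obtain ⟨w', hw', hlen0, hneg⟩ := Nat.sInf_mem hne
  rw [show sInf _ = D.dp x from rfl, h0] at hlen0
  have : w' = 1 := eq_one_of_len_eq_zero hw' hlen0
  subst this
  rw [Units.val_one, Module.End.one_apply] at hneg
  exact plc_neg_not_plc D hx.2 hneg.2

lemma len_mul_simple_le {w : (Module.End ℝ V)ˣ} (hw : w ∈ D.Wgrp)
    {s : (Module.End ℝ V)ˣ} (hs : s ∈ D.simples) : D.len (w * s) ≤ D.len w + 1 := by
  obtain ⟨l, hl, hprod, hlength⟩ := exists_reduced_word hw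
  have hword : D.IsWord (l ++ [s]) := by
    intro u hu
    rcases List.mem_append.1 hu with h | h
    · exact hl u h
    · rw [List.mem_singleton.1 h]; exact hs
  have := len_le_of_word hword (by rw [List.prod_append, List.prod_cons, List.prod_nil,
    mul_one, hprod])
  rw [List.length_append, List.length_cons, List.length_nil] at this
  omega

/-- Lemma 3.18: the `T(x)` case. -/
lemma key1 {x : V} (hx : x ∈ D.posRoots) {w : (Module.End ℝ V)ˣ} (hw : w ∈ D.Wgrp)
    (hlen : D.len w = D.dp x)
    (hneg : ((w⁻¹ : (Module.End ℝ V)ˣ) : Module.End ℝ V) x ∈ D.negRoots) :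
    ∀ b ∈ D.NSet w⁻¹, 0 < D.B b x := by
  intro b hb
  obtain ⟨hbpos, hbneg⟩ := hb
  by_contra hle
  push_neg at hle
  have hbr : b ∈ D.roots := hbpos.1
  have hbP : b ∈ PLC D.Pi := hbpos.2
  have hwinv : w⁻¹ ∈ D.Wgrp := inv_mem hw
  have hdesc : D.len (w⁻¹ * D.ru b (root_norm hbr)) < D.len w⁻¹ :=
    descent hwinv hbr hbP hbneg.2
  have hvmem : w⁻¹ * D.ru b (root_norm hbr) ∈ D.Wgrp := mul_mem hwinv (ru_mem_Wgrp hbr)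
  have hxU : x ∈ D.U := roots_subset_U hx.1
  have hbU : b ∈ D.U := roots_subset_U hbr
  have hBxb : D.B x b = D.B b x := B_symm_on_U x hxU b hbU
  have himg : ((w⁻¹ * D.ru b (root_norm hbr) : (Module.End ℝ V)ˣ) : Module.End ℝ V) x
      = ((w⁻¹ : (Module.End ℝ V)ˣ) : Module.End ℝ V) x
        - (2 * D.B x b) • (((w⁻¹ : (Module.End ℝ V)ˣ) : Module.End ℝ V) b) := by
    rw [unit_apply_mul, ru_val, refl_apply, map_sub, map_smul]
  have hplc : -(((w⁻¹ * D.ru b (root_norm hbr) : (Module.End ℝ V)ˣ) : Module.End ℝ V) x)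
      ∈ PLC D.Pi := by
    rw [himg]
    have e : -(((w⁻¹ : (Module.End ℝ V)ˣ) : Module.End ℝ V) x
          - (2 * D.B x b) • (((w⁻¹ : (Module.End ℝ V)ˣ) : Module.End ℝ V) b))
        = -(((w⁻¹ : (Module.End ℝ V)ˣ) : Module.End ℝ V) x)
          + (-(2 * D.B x b)) • (-(((w⁻¹ : (Module.End ℝ V)ˣ) : Module.End ℝ V) b)) := by
      module
    rw [e]
    exact plc_add_smul_nonneg hneg.2 (by rw [hBxb]; linarith) hbneg.2
  have hroots : -(((w⁻¹ * D.ru b (root_norm hbr) : (Module.End ℝ V)ˣ) : Module.End ℝ V) x)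
      ∈ D.roots := roots_neg (roots_smul_mem hvmem hx.1)
  have hnegroot : ((w⁻¹ * D.ru b (root_norm hbr) : (Module.End ℝ V)ˣ) : Module.End ℝ V) x
      ∈ D.negRoots := ⟨hroots, hplc⟩
  have hdp := dp_le hvmem hnegroot
  have hlwinv : D.len w⁻¹ = D.len w := len_inv hw
  omega

end CoxeterDatum

/-- Lemma 3.18 and Lemma 3.19: roots in `N(w⁻¹)` for `w ∈ T(x)` or `w ∈ S(x)`
pair positively with `x`. -/
theorem N_of_minimal_word_pairs_positively (D : CoxeterDatum V) {x : V}
    (hx : x ∈ D.posRoots) (w : (Module.End ℝ V)ˣ) (hw : w ∈ D.Wgrp) :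
    ((D.len w = D.dp x ∧ ((w⁻¹ : (Module.End ℝ V)ˣ) : Module.End ℝ V) x ∈ D.negRoots →
      ∀ b ∈ D.NSet w⁻¹, 0 < D.B b x)) ∧
    ((D.len w = D.dp x - 1 ∧ ((w⁻¹ : (Module.End ℝ V)ˣ) : Module.End ℝ V) x ∈ D.Pi →
      ∀ b ∈ D.NSet w⁻¹, 0 < D.B b x)) := by
  open CoxeterDatum in
  constructor
  · rintro ⟨hlen, hneg⟩
    exact CoxeterDatum.key1 hx hw hlen hneg
  · rintro ⟨hlen, hPi⟩ b hb
    set a : V := ((w⁻¹ : (Module.End ℝ V)ˣ) : Module.End ℝ V) x with hadef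
    have ha : a ∈ D.Pi := hPi
    set s : (Module.End ℝ V)ˣ := D.sru a ha with hsdef
    have hsmem : s ∈ D.Wgrp := CoxeterDatum.sru_mem_Wgrp ha
    have husmem : w * s ∈ D.Wgrp := mul_mem hw hsmem
    have hsinv : s⁻¹ = s := CoxeterDatum.ru_inv _ _
    have hwsx : (((w * s)⁻¹ : (Module.End ℝ V)ˣ) : Module.End ℝ V) x = -a := by
      rw [mul_inv_rev, hsinv, CoxeterDatum.unit_apply_mul, ← hadef, hsdef]
      show D.refl a a = -a
      exact CoxeterDatum.refl_self a (D.norm_one a ha)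
    have hapos : a ∈ D.posRoots :=
      ⟨CoxeterDatum.mem_roots_of_mem_Pi ha, mem_PLC_of_mem ha⟩
    have hnegroot : (((w * s)⁻¹ : (Module.End ℝ V)ˣ) : Module.End ℝ V) x ∈ D.negRoots := by
      show -(((w * s)⁻¹ : (Module.End ℝ V)ˣ) : Module.End ℝ V) x ∈ D.posRoots
      rw [hwsx, neg_neg]
      exact hapos
    have hwsinv : (w * s)⁻¹ ∈ D.Wgrp := inv_mem husmem
    have hdple : D.dp x ≤ D.len (w * s) := by
      have h1 := CoxeterDatum.dp_le hwsinv hnegroot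
      have h2 := CoxeterDatum.len_inv husmem
      omega
    have hdppos : 1 ≤ D.dp x := CoxeterDatum.dp_pos hx hwsinv hnegroot
    have hlenle : D.len (w * s) ≤ D.len w + 1 :=
      CoxeterDatum.len_mul_simple_le hw (CoxeterDatum.sru_mem_simples ha)
    have hlenws : D.len (w * s) = D.dp x := by omega
    have hkey := CoxeterDatum.key1 hx husmem hlenws hnegroot
    apply hkey
    obtain ⟨hbpos, hbneg⟩ := hb
    refine ⟨hbpos, ?_⟩
    -- (w*s)⁻¹ b = refl a (w⁻¹ b)
    have himg : (((w * s)⁻¹ : (Module.End ℝ V)ˣ) : Module.End ℝ V) b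
        = D.refl a (((w⁻¹ : (Module.End ℝ V)ˣ) : Module.End ℝ V) b) := by
      rw [mul_inv_rev, hsinv, CoxeterDatum.unit_apply_mul]
      rfl
    set e : V := -(((w⁻¹ : (Module.End ℝ V)ˣ) : Module.End ℝ V) b) with hedef
    have hepos : e ∈ D.posRoots := hbneg
    by_cases hea : e = a
    · -- impossible: b = -x
      exfalso
      have hwb : ((w⁻¹ : (Module.End ℝ V)ˣ) : Module.End ℝ V) b = -a := by
        rw [← hea, hedef, neg_neg]
      have hb_eq : b = -x := by
        have h1 : (w : Module.End ℝ V) (((w⁻¹ : (Module.End ℝ V)ˣ) : Module.End ℝ V) b)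
            = (w : Module.End ℝ V) (-a) := by rw [hwb]
        rw [CoxeterDatum.unit_apply_inv_apply, map_neg, hadef,
          CoxeterDatum.unit_apply_inv_apply] at h1
        exact h1
      rw [hb_eq] at hbpos
      exact CoxeterDatum.plc_neg_not_plc D hx.2 hbpos.2
    · -- refl a e positive
      have heroot : e ∈ D.roots := hepos.1
      have hrae_root : D.refl a e ∈ D.roots := by
        have h1 : D.refl a e = ((D.sru a ha : (Module.End ℝ V)ˣ) : Module.End ℝ V) e := rfl
        rw [h1]
        exact CoxeterDatum.roots_smul_mem (CoxeterDatum.sru_mem_Wgrp ha) heroot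
      have hrae_plc : D.refl a e ∈ PLC D.Pi := by
        rcases CoxeterDatum.root_dichotomy hrae_root with h | h
        · exact h
        · exact absurd (CoxeterDatum.perm_fact ha hepos.2 heroot h) hea
      show -((((w * s)⁻¹ : (Module.End ℝ V)ˣ) : Module.End ℝ V) b) ∈ D.posRoots
      have hfinal : -((((w * s)⁻¹ : (Module.End ℝ V)ˣ) : Module.End ℝ V) b) = D.refl a e := by
        rw [himg, hedef, map_neg]
      rw [hfinal]
      exact ⟨hrae_root, hrae_plc⟩
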